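/- There is an absolute constant C > 0 such that the following holds. For every n ≥ 1, every pair of probability vectors p, q ∈ [0,1]^n (i.e., ∑_{i=1}^n p_i = ∑_{i=1}^n q_i = 1), and every δ ∈ (0,1]: |d_TV(F_δ(p), F_δ(q)) − δ·d_TV(p,q)| ≤ C·δ², where F_δ(p) denotes the product distribution over {0,1}^n with mean vector (1 − e^{−δ·p_i})_{i=1,...,n}, d_TV(p,q) = (1/2)·∑_{i=1}^n |p_i − q_i|, and d_TV(F_δ(p), F_δ(q)) = (1/2)·∑_{x∈{0,1}^n} |F_δ(p)(x) − F_δ(q)(x)|. Moreover, the upper deviation is one-sided: d_TV(F_δ(p), F_δ(q)) ≤ δ·d_TV(p,q). -/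

import Mathlib

/-- The product distribution over `{0,1}^n` with mean vector `p`. -/
noncomputable def prodDist {n : ℕ} (p : Fin n → ℝ) : (Fin n → Bool) → ℝ :=
  fun x => ∏ i, if x i then p i else 1 - p i

/-- Total variation distance between two distributions on a finite set:
half the L1 distance. -/
noncomputable def tvDist {α : Type*} [Fintype α] (P Q : α → ℝ) : ℝ :=
  (1/2) * ∑ x, |P x - Q x|

/-- `F_δ(p)`: the product distribution over `{0,1}^n` with mean vector
`(1 − e^{−δ p_i})_i`. -/
noncomputable def Fdelta {n : ℕ} (δ : ℝ) (p : Fin n → ℝ) : (Fin n → Bool) → ℝ :=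
  prodDist (fun i => 1 - Real.exp (-(δ * p i)))

open Finset Real

lemma Fdelta_apply {n : ℕ} (δ : ℝ) (p : Fin n → ℝ) (x : Fin n → Bool) :
    Fdelta δ p x = ∏ i, (if x i then 1 - Real.exp (-(δ * p i)) else Real.exp (-(δ * p i))) := by
  unfold Fdelta prodDist
  exact Finset.prod_congr rfl fun i _ => by cases h : x i <;> simp

lemma sum_prodDist {n : ℕ} (r : Fin n → ℝ) : ∑ x : Fin n → Bool, prodDist r x = 1 := by
  unfold prodDist
  rw [← Fintype.prod_sum (fun i (b : Bool) => if b then r i else 1 - r i)]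
  simp

lemma Fdelta_nonneg {n : ℕ} {δ : ℝ} {p : Fin n → ℝ} (h : ∀ i, 0 ≤ δ * p i) (x : Fin n → Bool) :
    0 ≤ Fdelta δ p x := by
  rw [Fdelta_apply]
  apply Finset.prod_nonneg
  intro i _
  cases hx : x i
  · simp only [Bool.false_eq_true, if_false]
    exact (Real.exp_pos _).le
  · simp only [if_true]
    have : Real.exp (-(δ * p i)) ≤ 1 := by
      rw [← Real.exp_zero]
      exact Real.exp_le_exp.2 (by linarith [h i])
    linarith

lemma sum_Fdelta {n : ℕ} (δ : ℝ) (p : Fin n → ℝ) : ∑ x : Fin n → Bool, Fdelta δ p x = 1 :=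
  sum_prodDist _
lemma Fdelta_conv {n : ℕ} (a b : ℝ) (p : Fin n → ℝ) (x : Fin n → Bool) :
    Fdelta (a + b) p x =
      ∑ w ∈ univ.filter (fun w : Fin n → Bool × Bool => (fun i => (w i).1 || (w i).2) = x),
        Fdelta a p (fun i => (w i).1) * Fdelta b p (fun i => (w i).2) := by
  rw [Finset.sum_filter]
  have step : ∀ w : Fin n → Bool × Bool,
      (if (fun i => (w i).1 || (w i).2) = x then
        Fdelta a p (fun i => (w i).1) * Fdelta b p (fun i => (w i).2) else 0)
      = ∏ i, (if ((w i).1 || (w i).2) = x i then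
          (if (w i).1 then 1 - Real.exp (-(a * p i)) else Real.exp (-(a * p i))) *
          (if (w i).2 then 1 - Real.exp (-(b * p i)) else Real.exp (-(b * p i))) else 0) := by
    intro w
    rw [Fintype.prod_ite_zero]
    by_cases h : ∀ i, ((w i).1 || (w i).2) = x i
    · rw [if_pos h, if_pos (funext h)]
      rw [Fdelta_apply, Fdelta_apply, ← Finset.prod_mul_distrib]
    · rw [if_neg h, if_neg (fun hx => h (fun i => congrFun hx i))]
  simp only [step]
  rw [← Fintype.prod_sum (fun i (u : Bool × Bool) => if (u.1 || u.2) = x i then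
          (if u.1 then 1 - Real.exp (-(a * p i)) else Real.exp (-(a * p i))) *
          (if u.2 then 1 - Real.exp (-(b * p i)) else Real.exp (-(b * p i))) else 0)]
  rw [Fdelta_apply]
  apply Finset.prod_congr rfl
  intro i _
  rw [Fintype.sum_prod_type]
  simp only [Fintype.sum_bool]
  have hE : Real.exp (-(a * p i)) * Real.exp (-(b * p i)) = Real.exp (-((a + b) * p i)) := by
    rw [← Real.exp_add]; ring_nf
  cases hx : x i <;> simp <;> linarith
lemma sum_split {n : ℕ} (f g : (Fin n → Bool) → ℝ) :
    ∑ w : Fin n → Bool × Bool, f (fun i => (w i).1) * g (fun i => (w i).2)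
      = (∑ y, f y) * (∑ z, g z) := by
  calc ∑ w : Fin n → Bool × Bool, f (fun i => (w i).1) * g (fun i => (w i).2)
      = ∑ yz : (Fin n → Bool) × (Fin n → Bool), f yz.1 * g yz.2 :=
        Fintype.sum_equiv (Equiv.arrowProdEquivProdArrow (Fin n) (fun _ => Bool) (fun _ => Bool)) _ _ (fun w => rfl)
    _ = ∑ y, ∑ z, f y * g z := Fintype.sum_prod_type (f := fun yz => f yz.1 * g yz.2)
    _ = (∑ y, f y) * (∑ z, g z) := by rw [Finset.sum_mul_sum]

lemma tv_add {n : ℕ} (p q : Fin n → ℝ) (hp : ∀ i, 0 ≤ p i) (hq : ∀ i, 0 ≤ q i)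
    {a b : ℝ} (ha : 0 ≤ a) (hb : 0 ≤ b) :
    ∑ x : Fin n → Bool, |Fdelta (a + b) p x - Fdelta (a + b) q x| ≤
      (∑ x : Fin n → Bool, |Fdelta a p x - Fdelta a q x|) +
      ∑ x : Fin n → Bool, |Fdelta b p x - Fdelta b q x| := by
  have hap : ∀ i, 0 ≤ a * p i := fun i => mul_nonneg ha (hp i)
  have haq : ∀ i, 0 ≤ a * q i := fun i => mul_nonneg ha (hq i)
  have hbp : ∀ i, 0 ≤ b * p i := fun i => mul_nonneg hb (hp i)
  have hbq : ∀ i, 0 ≤ b * q i := fun i => mul_nonneg hb (hq i)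
  calc ∑ x : Fin n → Bool, |Fdelta (a + b) p x - Fdelta (a + b) q x|
      ≤ ∑ x : Fin n → Bool, ∑ w ∈ univ.filter
          (fun w : Fin n → Bool × Bool => (fun i => (w i).1 || (w i).2) = x),
          |Fdelta a p (fun i => (w i).1) * Fdelta b p (fun i => (w i).2)
            - Fdelta a q (fun i => (w i).1) * Fdelta b q (fun i => (w i).2)| := by
        apply Finset.sum_le_sum
        intro x _
        rw [Fdelta_conv a b p x, Fdelta_conv a b q x, ← Finset.sum_sub_distrib]
        exact Finset.abs_sum_le_sum_abs _ _
    _ = ∑ w : Fin n → Bool × Bool,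
          |Fdelta a p (fun i => (w i).1) * Fdelta b p (fun i => (w i).2)
            - Fdelta a q (fun i => (w i).1) * Fdelta b q (fun i => (w i).2)| :=
        Finset.sum_fiberwise _ _ _
    _ ≤ ∑ w : Fin n → Bool × Bool,
          (|Fdelta a p (fun i => (w i).1) - Fdelta a q (fun i => (w i).1)|
              * Fdelta b p (fun i => (w i).2)
            + Fdelta a q (fun i => (w i).1)
              * |Fdelta b p (fun i => (w i).2) - Fdelta b q (fun i => (w i).2)|) := by
        apply Finset.sum_le_sum
        intro w _
        set y := fun i => (w i).1
        set z := fun i => (w i).2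
        have h1 : Fdelta a p y * Fdelta b p z - Fdelta a q y * Fdelta b q z
            = (Fdelta a p y - Fdelta a q y) * Fdelta b p z
              + Fdelta a q y * (Fdelta b p z - Fdelta b q z) := by ring
        rw [h1]
        refine (abs_add_le _ _).trans ?_
        rw [abs_mul, abs_mul, abs_of_nonneg (Fdelta_nonneg hbp z),
          abs_of_nonneg (Fdelta_nonneg haq y)]
    _ = _ := by
        rw [Finset.sum_add_distrib]
        have h1 : (∑ w : Fin n → Bool × Bool,
            |Fdelta a p (fun i => (w i).1) - Fdelta a q (fun i => (w i).1)|
              * Fdelta b p (fun i => (w i).2))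
            = (∑ y, |Fdelta a p y - Fdelta a q y|) * (∑ z, Fdelta b p z) :=
          sum_split (fun y => |Fdelta a p y - Fdelta a q y|) (Fdelta b p)
        have h2 : (∑ w : Fin n → Bool × Bool,
            Fdelta a q (fun i => (w i).1)
              * |Fdelta b p (fun i => (w i).2) - Fdelta b q (fun i => (w i).2)|)
            = (∑ y, Fdelta a q y) * (∑ z, |Fdelta b p z - Fdelta b q z|) :=
          sum_split (Fdelta a q) (fun z => |Fdelta b p z - Fdelta b q z|)
        rw [h1, h2, sum_Fdelta, sum_Fdelta, mul_one, one_mul]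
lemma prod_one_add_le {ι : Type*} [DecidableEq ι] (S : Finset ι) (w : ι → ℝ) (hw : ∀ i ∈ S, 0 ≤ w i) :
    ∏ i ∈ S, (1 + w i) ≤
      1 + (∑ i ∈ S, w i) + (∑ i ∈ S, w i) ^ 2 * Real.exp (∑ i ∈ S, w i) := by
  induction S using Finset.induction with
  | empty => simp
  | insert a S' hnot ih =>
    rw [Finset.prod_insert hnot, Finset.sum_insert hnot]
    have hwa : 0 ≤ w a := hw a (Finset.mem_insert_self a S')
    have hw' : ∀ i ∈ S', 0 ≤ w i := fun i hi => hw i (Finset.mem_insert_of_mem hi)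
    have ih' := ih hw'
    set s := ∑ i ∈ S', w i with hs
    have hs0 : 0 ≤ s := Finset.sum_nonneg hw'
    have h1 : (1 : ℝ) ≤ Real.exp s := Real.one_le_exp hs0
    have h2 : 1 + w a ≤ Real.exp (w a) := by linarith [Real.add_one_le_exp (w a)]
    have h3 : Real.exp (w a + s) = Real.exp (w a) * Real.exp s := Real.exp_add _ _
    have h4 : (1 : ℝ) ≤ Real.exp (w a) := Real.one_le_exp hwa
    have hprod : (0:ℝ) ≤ ∏ i ∈ S', (1 + w i) :=
      Finset.prod_nonneg fun i hi => by linarith [hw' i hi]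
    calc (1 + w a) * ∏ i ∈ S', (1 + w i)
        ≤ (1 + w a) * (1 + s + s ^ 2 * Real.exp s) := by
          apply mul_le_mul_of_nonneg_left ih' (by linarith)
      _ ≤ 1 + (w a + s) + (w a + s) ^ 2 * Real.exp (w a + s) := by
          rw [h3]
          have h5 : 0 ≤ s ^ 2 * Real.exp s * (Real.exp (w a) - (1 + w a)) := by
            apply mul_nonneg (mul_nonneg (sq_nonneg s) (Real.exp_pos s).le); linarith
          have h6 : 0 ≤ w a * s * (Real.exp (w a) * Real.exp s - 1) := by
            apply mul_nonneg (mul_nonneg hwa hs0); nlinarith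
          have h7 : 0 ≤ w a ^ 2 * (Real.exp (w a) * Real.exp s) := by positivity
          have h8 : 0 ≤ s * w a * (Real.exp (w a) * Real.exp s) := by
            apply mul_nonneg (mul_nonneg hs0 hwa); positivity
          nlinarith [h5, h6, h7, h8]
      _ = _ := by ring_nf
def ind {n : ℕ} (i : Fin n) : Fin n → Bool := fun j => decide (j = i)

lemma Fdelta_false {n : ℕ} (δ : ℝ) (p : Fin n → ℝ) (hp1 : ∑ i, p i = 1) :
    Fdelta δ p (fun _ => false) = Real.exp (-δ) := by
  rw [Fdelta_apply]
  simp only [Bool.false_eq_true, if_false]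
  rw [← Real.exp_sum]
  congr 1
  have h : ∀ x, -(δ * p x) = (-δ) * p x := fun x => by ring
  simp_rw [h]
  rw [← Finset.mul_sum, hp1, mul_one]

lemma Fdelta_ind {n : ℕ} (δ : ℝ) (p : Fin n → ℝ) (hp1 : ∑ i, p i = 1) (i : Fin n) :
    Fdelta δ p (ind i) = Real.exp (-δ) * (Real.exp (δ * p i) - 1) := by
  rw [Fdelta_apply]
  rw [← Finset.mul_prod_erase univ _ (Finset.mem_univ i)]
  have h1 : (if ind i i then 1 - Real.exp (-(δ * p i)) else Real.exp (-(δ * p i)))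
      = 1 - Real.exp (-(δ * p i)) := by simp [ind]
  have h2 : ∏ j ∈ univ.erase i,
      (if ind i j then 1 - Real.exp (-(δ * p j)) else Real.exp (-(δ * p j)))
      = Real.exp (∑ j ∈ univ.erase i, -(δ * p j)) := by
    rw [Real.exp_sum]
    exact Finset.prod_congr rfl fun j hj => by
      simp [ind, (Finset.mem_erase.1 hj).1]
  have h3 : ∑ j ∈ univ.erase i, -(δ * p j) = -(δ * (1 - p i)) := by
    have h0 := Finset.sum_erase_add univ p (Finset.mem_univ i)
    rw [hp1] at h0
    have h : ∀ x, -(δ * p x) = (-δ) * p x := fun x => by ring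
    simp_rw [h]
    rw [← Finset.mul_sum]
    have h5 : ∑ j ∈ univ.erase i, p j = 1 - p i := by linarith
    rw [h5]
    ring
  rw [h1, h2, h3]
  have e1 : Real.exp (-(δ * p i)) * Real.exp (δ * p i) = 1 := by
    rw [← Real.exp_add]; simp
  have e2 : Real.exp (-(δ * (1 - p i))) = Real.exp (-δ) * Real.exp (δ * p i) := by
    rw [← Real.exp_add]; ring_nf
  rw [e2]
  linear_combination (- Real.exp (-δ)) * e1
lemma tail_bound {n : ℕ} (p : Fin n → ℝ) (hp : ∀ i, p i ∈ Set.Icc (0:ℝ) 1)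
    (hp1 : ∑ i, p i = 1) {δ : ℝ} (hδ0 : 0 < δ) (hδ1 : δ ≤ 1) :
    1 - Real.exp (-δ) * (1 + ∑ i, (Real.exp (δ * p i) - 1)) ≤ 30 * δ ^ 2 := by
  set w : Fin n → ℝ := fun i => Real.exp (δ * p i) - 1 with hw
  have hdp : ∀ i, 0 ≤ δ * p i ∧ δ * p i ≤ 1 := fun i =>
    ⟨mul_nonneg hδ0.le (hp i).1, mul_le_one₀ hδ1 (hp i).1 (hp i).2⟩
  have hw0 : ∀ i ∈ univ, 0 ≤ w i := fun i _ => by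
    simp only [hw]; linarith [Real.one_le_exp (hdp i).1]
  have hwle : ∀ i, w i ≤ 2 * (δ * p i) := by
    intro i
    have ht : |δ * p i| ≤ 1 := abs_le.2 ⟨by linarith [(hdp i).1], (hdp i).2⟩
    have h := abs_le.1 (Real.abs_exp_sub_one_sub_id_le ht)
    have hsq : (δ * p i) ^ 2 ≤ δ * p i := by nlinarith [(hdp i).1, (hdp i).2]
    simp only [hw]
    linarith [h.2]
  set S := ∑ i, w i with hS
  have hS0 : 0 ≤ S := Finset.sum_nonneg hw0
  have hSle : S ≤ 2 * δ := by
    calc S ≤ ∑ i, 2 * (δ * p i) := Finset.sum_le_sum fun i _ => hwle i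
      _ = 2 * δ := by rw [← Finset.mul_sum, ← Finset.mul_sum, hp1]; ring
  have hexp : Real.exp δ = ∏ i, (1 + w i) := by
    have : ∀ i, 1 + w i = Real.exp (δ * p i) := fun i => by simp [hw]
    simp_rw [this]
    rw [← Real.exp_sum, ← Finset.mul_sum, hp1, mul_one]
  have hkey := prod_one_add_le univ w hw0
  rw [← hexp, ← hS] at hkey
  have hinv : Real.exp (-δ) * Real.exp δ = 1 := by rw [← Real.exp_add]; simp
  have hE1 : Real.exp (-δ) ≤ 1 := Real.exp_le_one_iff.2 (by linarith)
  have hE0 : 0 < Real.exp (-δ) := Real.exp_pos _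
  have heS : Real.exp S ≤ Real.exp 1 * Real.exp 1 := by
    rw [← Real.exp_add]
    exact Real.exp_le_exp.2 (by linarith)
  have he1 : Real.exp 1 < 2.7182818286 := Real.exp_one_lt_d9
  have he1' : 0 < Real.exp 1 := Real.exp_pos 1
  -- 1 - E(1+S) = E(e^δ - 1 - S) ≤ E S² e^S ≤ S² e^S ≤ 4δ² e² ≤ 30δ²
  have step1 : 1 - Real.exp (-δ) * (1 + S) ≤ Real.exp (-δ) * (S ^ 2 * Real.exp S) := by
    nlinarith [mul_le_mul_of_nonneg_left hkey hE0.le]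
  have step2 : Real.exp (-δ) * (S ^ 2 * Real.exp S) ≤ S ^ 2 * Real.exp S := by
    nlinarith [mul_nonneg (sq_nonneg S) (Real.exp_pos S).le]
  have step3 : S ^ 2 * Real.exp S ≤ 30 * δ ^ 2 := by
    have h1 : S ^ 2 ≤ 4 * δ ^ 2 := by nlinarith
    have h2 : Real.exp S ≤ 7.4 := by nlinarith
    have h3 : S ^ 2 * Real.exp S ≤ (4 * δ ^ 2) * 7.4 :=
      mul_le_mul h1 h2 (Real.exp_pos S).le (by positivity)
    nlinarith [sq_nonneg δ]
  linarith

lemma scalar_est {δ p q : ℝ} (hδ0 : 0 < δ) (hδ1 : δ ≤ 1) (hp : 0 ≤ p) (hp1 : p ≤ 1)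
    (hq : 0 ≤ q) (hq1 : q ≤ 1) :
    |Real.exp (-δ) * (Real.exp (δ * p) - Real.exp (δ * q)) - δ * (p - q)| ≤
      2 * δ ^ 2 * (p + q) := by
  have hup : |δ * p| ≤ 1 := abs_le.2 ⟨by nlinarith, by nlinarith⟩
  have huq : |δ * q| ≤ 1 := abs_le.2 ⟨by nlinarith, by nlinarith⟩
  have h1 := abs_le.1 (Real.abs_exp_sub_one_sub_id_le hup)
  have h2 := abs_le.1 (Real.abs_exp_sub_one_sub_id_le huq)
  have hE1 : Real.exp (-δ) ≤ 1 := Real.exp_le_one_iff.2 (by linarith)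
  have hE2 : 1 - δ ≤ Real.exp (-δ) := by linarith [Real.add_one_le_exp (-δ)]
  have hE0 : 0 < Real.exp (-δ) := Real.exp_pos _
  have key : Real.exp (-δ) * (Real.exp (δ * p) - Real.exp (δ * q)) - δ * (p - q)
      = Real.exp (-δ) * (Real.exp (δ * p) - 1 - δ * p)
        - Real.exp (-δ) * (Real.exp (δ * q) - 1 - δ * q)
        + (Real.exp (-δ) - 1) * (δ * (p - q)) := by ring
  rw [key]
  refine (abs_add_le _ _).trans ?_
  have b3 : |(Real.exp (-δ) - 1) * (δ * (p - q))| ≤ δ * (δ * (p + q)) := by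
    rw [abs_mul]
    apply mul_le_mul
    · rw [abs_of_nonpos (by linarith)]; linarith
    · rw [abs_mul, abs_of_nonneg hδ0.le]
      have : |p - q| ≤ p + q := abs_le.2 ⟨by linarith, by linarith⟩
      exact mul_le_mul_of_nonneg_left this hδ0.le
    · positivity
    · linarith
  have b12 : |Real.exp (-δ) * (Real.exp (δ * p) - 1 - δ * p)
      - Real.exp (-δ) * (Real.exp (δ * q) - 1 - δ * q)|
      ≤ (δ * p) ^ 2 + (δ * q) ^ 2 := by
    refine (abs_sub _ _).trans ?_
    rw [abs_mul, abs_mul, abs_of_nonneg hE0.le]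
    have hap := Real.abs_exp_sub_one_sub_id_le hup
    have haq := Real.abs_exp_sub_one_sub_id_le huq
    nlinarith [abs_nonneg (Real.exp (δ * p) - 1 - δ * p),
      abs_nonneg (Real.exp (δ * q) - 1 - δ * q)]
  have hfin : (δ * p) ^ 2 + (δ * q) ^ 2 + δ * (δ * (p + q)) ≤ 2 * δ ^ 2 * (p + q) := by
    nlinarith [mul_nonneg (mul_nonneg (sq_nonneg δ) hp) (by linarith : (0:ℝ) ≤ 1 - p),
      mul_nonneg (mul_nonneg (sq_nonneg δ) hq) (by linarith : (0:ℝ) ≤ 1 - q)]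
  linarith
lemma ind_injective {n : ℕ} : Function.Injective (ind (n := n)) := by
  intro i j h
  have := congrFun h i
  simp [ind] at this
  exact this

lemma false_not_mem_ind {n : ℕ} :
    (fun _ => false) ∉ (univ : Finset (Fin n)).image ind := by
  intro h
  obtain ⟨i, -, hi⟩ := Finset.mem_image.1 h
  have := congrFun hi i
  simp [ind] at this

lemma main_est {n : ℕ} (p q : Fin n → ℝ)
    (hp : ∀ i, p i ∈ Set.Icc (0:ℝ) 1) (hq : ∀ i, q i ∈ Set.Icc (0:ℝ) 1)
    (hp1 : ∑ i, p i = 1) (hq1 : ∑ i, q i = 1)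
    {δ : ℝ} (hδ0 : 0 < δ) (hδ1 : δ ≤ 1) :
    |(∑ x : Fin n → Bool, |Fdelta δ p x - Fdelta δ q x|) - δ * (∑ i, |p i - q i|)| ≤
      64 * δ ^ 2 := by
  have hdp : ∀ i, 0 ≤ δ * p i := fun i => mul_nonneg hδ0.le (hp i).1
  have hdq : ∀ i, 0 ≤ δ * q i := fun i => mul_nonneg hδ0.le (hq i).1
  set s : Finset (Fin n → Bool) := insert (fun _ => false) ((univ : Finset (Fin n)).image ind)
    with hs
  have sum_s : ∀ f : (Fin n → Bool) → ℝ,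
      ∑ x ∈ s, f x = f (fun _ => false) + ∑ i, f (ind i) := by
    intro f
    rw [hs, Finset.sum_insert false_not_mem_ind,
      Finset.sum_image (fun i _ j _ h => ind_injective h)]
  -- the sum over s of |Fp - Fq|
  have hmid : ∑ x ∈ s, |Fdelta δ p x - Fdelta δ q x|
      = ∑ i, |Real.exp (-δ) * (Real.exp (δ * p i) - Real.exp (δ * q i))| := by
    rw [sum_s]
    rw [Fdelta_false δ p hp1, Fdelta_false δ q hq1]
    simp only [sub_self, abs_zero, zero_add]
    apply Finset.sum_congr rfl
    intro i _
    rw [Fdelta_ind δ p hp1 i, Fdelta_ind δ q hq1 i]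
    congr 1
    ring
  -- tail sums
  have htailp : ∑ x ∈ sᶜ, Fdelta δ p x ≤ 30 * δ ^ 2 := by
    have h1 : ∑ x ∈ s, Fdelta δ p x + ∑ x ∈ sᶜ, Fdelta δ p x = 1 := by
      rw [Finset.sum_add_sum_compl]; exact sum_Fdelta δ p
    have h2 : ∑ x ∈ s, Fdelta δ p x
        = Real.exp (-δ) * (1 + ∑ i, (Real.exp (δ * p i) - 1)) := by
      rw [sum_s, Fdelta_false δ p hp1]
      simp_rw [Fdelta_ind δ p hp1]
      rw [← Finset.mul_sum]
      ring
    have h3 := tail_bound p hp hp1 hδ0 hδ1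
    linarith
  have htailq : ∑ x ∈ sᶜ, Fdelta δ q x ≤ 30 * δ ^ 2 := by
    have h1 : ∑ x ∈ s, Fdelta δ q x + ∑ x ∈ sᶜ, Fdelta δ q x = 1 := by
      rw [Finset.sum_add_sum_compl]; exact sum_Fdelta δ q
    have h2 : ∑ x ∈ s, Fdelta δ q x
        = Real.exp (-δ) * (1 + ∑ i, (Real.exp (δ * q i) - 1)) := by
      rw [sum_s, Fdelta_false δ q hq1]
      simp_rw [Fdelta_ind δ q hq1]
      rw [← Finset.mul_sum]
      ring
    have h3 := tail_bound q hq hq1 hδ0 hδ1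
    linarith
  have htail : ∑ x ∈ sᶜ, |Fdelta δ p x - Fdelta δ q x| ≤ 60 * δ ^ 2 := by
    have : ∀ x ∈ sᶜ, |Fdelta δ p x - Fdelta δ q x| ≤ Fdelta δ p x + Fdelta δ q x := by
      intro x _
      have h1 := Fdelta_nonneg hdp x
      have h2 := Fdelta_nonneg hdq x
      rw [abs_sub_le_iff]; constructor <;> linarith
    calc ∑ x ∈ sᶜ, |Fdelta δ p x - Fdelta δ q x|
        ≤ ∑ x ∈ sᶜ, (Fdelta δ p x + Fdelta δ q x) := Finset.sum_le_sum this
      _ = ∑ x ∈ sᶜ, Fdelta δ p x + ∑ x ∈ sᶜ, Fdelta δ q x := Finset.sum_add_distrib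
      _ ≤ 60 * δ ^ 2 := by linarith
  -- middle comparison
  have hmid2 : |(∑ i, |Real.exp (-δ) * (Real.exp (δ * p i) - Real.exp (δ * q i))|)
      - δ * (∑ i, |p i - q i|)| ≤ 4 * δ ^ 2 := by
    have hper : ∀ i : Fin n,
        |(|Real.exp (-δ) * (Real.exp (δ * p i) - Real.exp (δ * q i))| - δ * |p i - q i|)|
        ≤ 2 * δ ^ 2 * (p i + q i) := by
      intro i
      have h1 : δ * |p i - q i| = |δ * (p i - q i)| := by
        rw [abs_mul, abs_of_nonneg hδ0.le]
      rw [h1]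
      refine (abs_abs_sub_abs_le_abs_sub _ _).trans ?_
      exact scalar_est hδ0 hδ1 (hp i).1 (hp i).2 (hq i).1 (hq i).2
    calc |(∑ i, |Real.exp (-δ) * (Real.exp (δ * p i) - Real.exp (δ * q i))|)
          - δ * (∑ i, |p i - q i|)|
        = |∑ i, (|Real.exp (-δ) * (Real.exp (δ * p i) - Real.exp (δ * q i))|
            - δ * |p i - q i|)| := by
          rw [Finset.sum_sub_distrib, ← Finset.mul_sum]
      _ ≤ ∑ i, |(|Real.exp (-δ) * (Real.exp (δ * p i) - Real.exp (δ * q i))|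
            - δ * |p i - q i|)| := Finset.abs_sum_le_sum_abs _ _
      _ ≤ ∑ i, 2 * δ ^ 2 * (p i + q i) := Finset.sum_le_sum fun i _ => hper i
      _ = 4 * δ ^ 2 := by
          rw [← Finset.mul_sum, Finset.sum_add_distrib, hp1, hq1]; ring
  -- combine
  have hsplit : ∑ x : Fin n → Bool, |Fdelta δ p x - Fdelta δ q x|
      = ∑ x ∈ s, |Fdelta δ p x - Fdelta δ q x|
        + ∑ x ∈ sᶜ, |Fdelta δ p x - Fdelta δ q x| :=
    (Finset.sum_add_sum_compl s _).symm
  rw [hsplit, hmid]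
  have habs : 0 ≤ ∑ x ∈ sᶜ, |Fdelta δ p x - Fdelta δ q x| :=
    Finset.sum_nonneg fun x _ => abs_nonneg _
  set A := ∑ i, |Real.exp (-δ) * (Real.exp (δ * p i) - Real.exp (δ * q i))|
  set B := ∑ x ∈ sᶜ, |Fdelta δ p x - Fdelta δ q x|
  set D := δ * ∑ i, |p i - q i|
  have hrw : A + B - D = (A - D) + B := by ring
  have habD : |A + B - D| ≤ |A - D| + B := by
    rw [hrw]
    refine (abs_add_le _ _).trans ?_
    rw [abs_of_nonneg habs]
  calc |A + B - D| ≤ |A - D| + B := habD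
    _ ≤ 4 * δ ^ 2 + 60 * δ ^ 2 := add_le_add hmid2 htail
    _ = 64 * δ ^ 2 := by ring
lemma tv_nsmul {n : ℕ} (p q : Fin n → ℝ) (hp : ∀ i, 0 ≤ p i) (hq : ∀ i, 0 ≤ q i)
    {ε : ℝ} (hε : 0 ≤ ε) : ∀ k : ℕ, 1 ≤ k →
    ∑ x : Fin n → Bool, |Fdelta ((k : ℝ) * ε) p x - Fdelta ((k : ℝ) * ε) q x| ≤
      (k : ℝ) * ∑ x : Fin n → Bool, |Fdelta ε p x - Fdelta ε q x| := by
  intro k hk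
  induction k, hk using Nat.le_induction with
  | base => simp
  | succ k hk ih =>
    have hcast : ((k + 1 : ℕ) : ℝ) * ε = (k : ℝ) * ε + ε := by push_cast; ring
    rw [hcast]
    have hadd := tv_add p q hp hq (a := (k : ℝ) * ε) (b := ε)
      (by positivity) hε
    push_cast
    linarith

theorem stmt13 : ∃ C : ℝ, 0 < C ∧
    ∀ (n : ℕ), 1 ≤ n → ∀ (p q : Fin n → ℝ),
      (∀ i, p i ∈ Set.Icc (0:ℝ) 1) → (∀ i, q i ∈ Set.Icc (0:ℝ) 1) →
      ∑ i, p i = 1 → ∑ i, q i = 1 →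
      ∀ δ : ℝ, δ ∈ Set.Ioc (0:ℝ) 1 →
        |tvDist (Fdelta δ p) (Fdelta δ q) - δ * ((1/2) * ∑ i, |p i - q i|)| ≤ C * δ ^ 2 ∧
        tvDist (Fdelta δ p) (Fdelta δ q) ≤ δ * ((1/2) * ∑ i, |p i - q i|) := by
  refine ⟨100, by norm_num, ?_⟩
  intro n _ p q hp hq hp1 hq1 δ hδ
  obtain ⟨hδ0, hδ1⟩ := hδ
  have hp0 : ∀ i, 0 ≤ p i := fun i => (hp i).1
  have hq0 : ∀ i, 0 ≤ q i := fun i => (hq i).1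
  set D : ℝ := ∑ i, |p i - q i| with hD
  have hD0 : 0 ≤ D := Finset.sum_nonneg fun i _ => abs_nonneg _
  have hme := main_est p q hp hq hp1 hq1 hδ0 hδ1
  constructor
  · have : tvDist (Fdelta δ p) (Fdelta δ q) - δ * ((1/2) * D)
        = (1/2) * ((∑ x : Fin n → Bool, |Fdelta δ p x - Fdelta δ q x|) - δ * D) := by
      unfold tvDist; ring
    rw [this, abs_mul]
    rw [abs_of_nonneg (by norm_num : (0:ℝ) ≤ (1/2 : ℝ))]
    nlinarith [sq_nonneg δ]
  · -- one-sided bound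
    have key : ∀ k : ℕ, 1 ≤ k →
        (∑ x : Fin n → Bool, |Fdelta δ p x - Fdelta δ q x|) ≤
          δ * D + 64 * δ ^ 2 / k := by
      intro k hk
      have hkR : (0 : ℝ) < k := by positivity
      have hε0 : 0 < δ / k := by positivity
      have hε1 : δ / k ≤ 1 := by
        rw [div_le_one hkR]
        calc δ ≤ 1 := hδ1
          _ ≤ (k : ℝ) := by exact_mod_cast hk
      have h1 := tv_nsmul p q hp0 hq0 hε0.le k hk
      rw [mul_div_cancel₀ δ (ne_of_gt hkR)] at h1
      have h2 := main_est p q hp hq hp1 hq1 hε0 hε1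
      have h2' : (∑ x : Fin n → Bool, |Fdelta (δ / k) p x - Fdelta (δ / k) q x|)
          ≤ (δ / k) * D + 64 * (δ / k) ^ 2 := by
        have := (abs_le.1 h2).2
        linarith
      calc (∑ x : Fin n → Bool, |Fdelta δ p x - Fdelta δ q x|)
          ≤ (k : ℝ) * ∑ x : Fin n → Bool, |Fdelta (δ / k) p x - Fdelta (δ / k) q x| := h1
        _ ≤ (k : ℝ) * ((δ / k) * D + 64 * (δ / k) ^ 2) :=
            mul_le_mul_of_nonneg_left h2' hkR.le
        _ = δ * D + 64 * δ ^ 2 / k := by field_simp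
    have main : (∑ x : Fin n → Bool, |Fdelta δ p x - Fdelta δ q x|) ≤ δ * D := by
      apply le_of_forall_pos_le_add
      intro ε hε
      obtain ⟨k, hkgt⟩ := exists_nat_gt (64 * δ ^ 2 / ε)
      have hk1 : 1 ≤ k := by
        rcases Nat.eq_zero_or_pos k with h0 | h0
        · exfalso
          subst h0
          have hge : (0:ℝ) ≤ 64 * δ ^ 2 / ε := by positivity
          simp only [Nat.cast_zero] at hkgt
          linarith
        · exact h0
      have hkR : (0 : ℝ) < k := by positivity
      have hlt : 64 * δ ^ 2 / k < ε := by
        rw [div_lt_iff₀ hkR]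
        rw [div_lt_iff₀ hε] at hkgt
        linarith
      linarith [key k hk1]
    unfold tvDist
    linarith
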